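/- Let p be an odd prime. Then the (p−1)-regular graph Π_p' is Ramanujan: every real eigenvalue μ of the adjacency matrix of Π_p' with |μ| ≠ p−1 satisfies |μ| ≤ 2·√(p−2). -/

import Mathlib

/-- Pairs `(λ, μ) ∈ (ℤ/N)²` with `gcd(λ, μ, N) = 1`. -/
abbrev PlatonicPair (N : ℕ) : Type :=
  {x : ZMod N × ZMod N // Nat.gcd (Nat.gcd x.1.val x.2.val) N = 1}

/-- Identify `(λ,μ)` with `(-λ,-μ)`. -/
instance platonicSetoid (N : ℕ) : Setoid (PlatonicPair N) where
  r x y := y.val = x.val ∨ y.val = -x.val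
  iseqv := by
    refine ⟨fun _ => Or.inl rfl, ?_, ?_⟩
    · rintro x y (h | h)
      · exact Or.inl h.symm
      · right; rw [h, neg_neg]
    · rintro x y z (h1 | h1) (h2 | h2)
      · exact Or.inl (h2.trans h1)
      · right; rw [h2, h1]
      · right; rw [h2, h1]
      · left; rw [h2, h1, neg_neg]

/-- Vertices of the Platonic graph: classes `[λ,μ] = {(λ,μ), (-λ,-μ)}`. -/
abbrev PlatonicVertex (N : ℕ) : Type := Quotient (platonicSetoid N)

/-- The Platonic graph `Π_N`: distinct classes `[λ,μ]`, `[ν,ω]` are adjacent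
iff `λω - μν = ±1` in `ℤ/N`. -/
def Platonic (N : ℕ) : SimpleGraph (PlatonicVertex N) where
  Adj a b := a ≠ b ∧ ∃ x y : PlatonicPair N, ⟦x⟧ = a ∧ ⟦y⟧ = b ∧
    (x.val.1 * y.val.2 - x.val.2 * y.val.1 = 1 ∨
     x.val.1 * y.val.2 - x.val.2 * y.val.1 = -1)
  symm := by
    constructor
    rintro a b ⟨hne, x, y, hx, hy, hdet⟩
    refine ⟨hne.symm, y, x, hy, hx, ?_⟩
    rcases hdet with h | h
    · right; linear_combination -h
    · left; linear_combination -h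
  loopless := ⟨fun a h => h.1 rfl⟩

instance platonicDecRel (N : ℕ) :
    DecidableRel (α := PlatonicPair N) (· ≈ ·) := fun x y =>
  inferInstanceAs (Decidable (y.val = x.val ∨ y.val = -x.val))

instance (N : ℕ) : DecidableEq (PlatonicVertex N) :=
  @Quotient.decidableEq _ _ (platonicDecRel N)

instance (N : ℕ) [NeZero N] : Fintype (PlatonicVertex N) :=
  Quotient.fintype _

instance platonicAdjDec (N : ℕ) [NeZero N] : DecidableRel (Platonic N).Adj := fun a b =>
  inferInstanceAs (Decidable (a ≠ b ∧ ∃ x y : PlatonicPair N, ⟦x⟧ = a ∧ ⟦y⟧ = b ∧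
    (x.val.1 * y.val.2 - x.val.2 * y.val.1 = 1 ∨
     x.val.1 * y.val.2 - x.val.2 * y.val.1 = -1)))

/-- The class of `(λ,μ)` has nonvanishing second coordinate. -/
def secondNZ (N : ℕ) (v : PlatonicVertex N) : Prop :=
  ∀ x : PlatonicPair N, ⟦x⟧ = v → x.val.2 ≠ 0

instance (N : ℕ) [NeZero N] : DecidablePred (secondNZ N) := fun _ =>
  Fintype.decidableForallFintype

/-- The modified Platonic graph `Π_p'`: induced subgraph of `Π_p` on the classes
`[λ,μ]` with `μ ≠ 0`. -/
def ModPlatonic (N : ℕ) : SimpleGraph {v : PlatonicVertex N | secondNZ N v} :=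
  SimpleGraph.induce {v : PlatonicVertex N | secondNZ N v} (Platonic N)

instance (N : ℕ) [NeZero N] : DecidableRel (ModPlatonic N).Adj := fun a b =>
  inferInstanceAs (Decidable ((Platonic N).Adj a b))


open Finset

namespace RamAux

variable {p : ℕ} [Fact p.Prime]

local notation "F" => ZMod p

lemma H0 (a : F) (c : ℝ) : ∑ t : F, (if t = a then c else 0) = c := by
  simp

lemma Hsub (a : F) (G : F → ℝ) :
    ∑ t : F, (if t = a then 0 else G t) = (∑ t : F, G t) - G a := by
  have : ∀ t : F, (if t = a then 0 else G t) = G t - (if t = a then G t else 0) := by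
    intro t; split_ifs <;> ring
  rw [Finset.sum_congr rfl fun t _ => this t, Finset.sum_sub_distrib]
  congr 1
  simp

lemma sum_const_real (c : ℝ) : ∑ _t : F, c = (p : ℝ) * c := by
  rw [Finset.sum_const, card_univ, ZMod.card]
  simp [nsmul_eq_mul]

/-- walk weights -/
def w : ℕ → F → F → F → F → ℝ
  | 0, x, u, y, v => if y = x ∧ v = u then 1 else 0
  | (k+1), x, u, y, v => ∑ t : F, w k (x+t) ((u*t)⁻¹) y v

lemma w_comp (k l : ℕ) (x u y v : F) :
    w (k+l) x u y v = ∑ z : F, ∑ m : F, w k x u z m * w l z m y v := by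
  induction k generalizing x u with
  | zero =>
    simp only [Nat.zero_add, w]
    rw [Finset.sum_eq_single x]
    · rw [Finset.sum_eq_single u]
      · simp
      · intro m _ hm; simp [hm]
      · simp
    · intro z _ hz
      apply Finset.sum_eq_zero; intro m _
      simp [hz]
    · simp
  | succ k ih =>
    have : k + 1 + l = (k + l) + 1 := by omega
    rw [this]
    show ∑ t : F, w (k+l) (x+t) ((u*t)⁻¹) y v = _
    rw [Finset.sum_congr rfl fun t _ => ih (x+t) ((u*t)⁻¹)]
    rw [Finset.sum_comm]
    refine Finset.sum_congr rfl fun z _ => ?_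
    rw [Finset.sum_comm]
    refine Finset.sum_congr rfl fun m _ => ?_
    rw [← Finset.sum_mul]
    rfl

lemma w1_eq (x u y v : F) :
    w 1 x u y v = if u * (y - x) = v⁻¹ then 1 else 0 := by
  show ∑ t : F, w 0 (x+t) ((u*t)⁻¹) y v = _
  simp only [w]
  rw [Finset.sum_congr rfl (g := fun t => if t = y - x ∧ v = (u*t)⁻¹ then (1:ℝ) else 0)
    (fun t _ => by
      congr 1
      rw [eq_iff_iff]
      constructor
      · rintro ⟨h1, h2⟩; exact ⟨by rw [h1]; ring, h2⟩
      · rintro ⟨h1, h2⟩; exact ⟨by rw [h1]; ring, h2⟩)]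
  rw [Finset.sum_congr rfl (g := fun t => if t = y - x then (if v = (u*t)⁻¹ then (1:ℝ) else 0) else 0)
    (fun t _ => by split_ifs with h1 h2 h3 <;> simp_all)]
  rw [Finset.sum_ite_eq' Finset.univ (y - x) (fun t => if v = (u*t)⁻¹ then (1:ℝ) else 0)]
  simp only [mem_univ, if_true]
  congr 1
  rw [eq_iff_iff]
  constructor
  · intro h; rw [h, inv_inv]
  · intro h; rw [h, inv_inv]

lemma w_succ (k : ℕ) (x u y v : F) :
    w (k+1) x u y v = ∑ t : F, w k (x+t) ((u*t)⁻¹) y v := rfl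

lemma w2_u_zero (x y v : F) (hv : v ≠ 0) : w 2 x 0 y v = 0 := by
  rw [w_succ]
  apply Finset.sum_eq_zero
  intro t _
  rw [zero_mul, inv_zero, w1_eq, zero_mul, if_neg]
  exact fun h => hv (by rw [← inv_inv v, ← h, inv_zero])

lemma w2_eq (x u y v : F) (hu : u ≠ 0) (hv : v ≠ 0) :
    w 2 x u y v =
      if u + v = 0 then (if y = x then (p-1:ℝ) else 0)
      else (if y = x then 0 else 1) := by
  rw [w_succ]
  have key : ∀ t : F, ((u*t)⁻¹ * (y - (x+t)) = v⁻¹) ↔ (t ≠ 0 ∧ (u+v)*t = v*(y-x)) := by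
    intro t
    by_cases ht : t = 0
    · subst ht
      simp only [mul_zero, inv_zero, zero_mul, ne_eq, not_true_eq_false, false_and, iff_false]
      exact fun h => hv (by rw [← inv_inv v, ← h, inv_zero])
    · have hut : u * t ≠ 0 := mul_ne_zero hu ht
      rw [inv_mul_eq_iff_eq_mul₀ hut, eq_comm, mul_inv_eq_iff_eq_mul₀ hv]
      constructor
      · intro h
        exact ⟨ht, by linear_combination h⟩
      · rintro ⟨-, h⟩
        linear_combination h
  rw [Finset.sum_congr rfl (g := fun t =>
      if (t ≠ 0 ∧ (u+v)*t = v*(y-x)) then (1:ℝ) else 0)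
    (fun t _ => by rw [w1_eq]; congr 1; rw [eq_iff_iff]; exact key t)]
  by_cases hs : u + v = 0
  · rw [if_pos hs]
    by_cases hxy : y = x
    · rw [if_pos hxy]
      rw [Finset.sum_congr rfl (g := fun t => if t = 0 then 0 else (1:ℝ))
        (fun t _ => by
          subst hxy
          simp only [hs, zero_mul, sub_self, mul_zero]
          split_ifs with h1 h2 h2 <;> simp_all)]
      rw [Hsub]
      simp [card_univ, ZMod.card]
    · rw [if_neg hxy]
      apply Finset.sum_eq_zero
      intro t _
      rw [if_neg]
      rintro ⟨-, h⟩
      rw [hs, zero_mul] at h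
      exact hxy (by
        have : y - x = 0 := by
          have hv' := hv
          rw [eq_comm, mul_eq_zero] at h
          rcases h with h | h
          · exact absurd h hv
          · exact h
        rw [sub_eq_zero] at this; exact this)
  · rw [if_neg hs]
    by_cases hxy : y = x
    · rw [if_pos hxy]
      apply Finset.sum_eq_zero
      intro t _
      rw [if_neg]
      rintro ⟨ht, h⟩
      subst hxy
      rw [sub_self, mul_zero] at h
      exact ht (by
        rcases mul_eq_zero.1 h with h' | h'
        · exact absurd h' hs
        · exact h')
    · rw [if_neg hxy]
      have hd : y - x ≠ 0 := sub_ne_zero.2 hxy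
      set t₀ : F := (u+v)⁻¹ * (v*(y-x)) with ht₀
      have ht₀ne : t₀ ≠ 0 := by
        apply mul_ne_zero (inv_ne_zero hs) (mul_ne_zero hv hd)
      rw [Finset.sum_congr rfl (g := fun t => if t = t₀ then (1:ℝ) else 0)
        (fun t _ => by
          congr 1
          rw [eq_iff_iff]
          constructor
          · rintro ⟨ht, h⟩
            rw [ht₀, ← h, inv_mul_cancel_left₀ hs]
          · intro h
            subst h
            refine ⟨ht₀ne, ?_⟩
            rw [ht₀, mul_inv_cancel_left₀ hs])]
      simp

lemma Hpick (b : F) (G : F → ℝ) (C : ℝ) :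
    ∑ m : F, (if m = b then C else G m) = (∑ m : F, G m) - G b + C := by
  have : ∀ m : F, (if m = b then C else G m) = G m + (if m = b then C - G m else 0) := by
    intro m; split_ifs <;> ring
  rw [Finset.sum_congr rfl fun m _ => this m, Finset.sum_add_distrib,
    Finset.sum_ite_eq' Finset.univ b fun m => C - G m]
  simp only [mem_univ, if_true]
  ring

lemma Hconst (D : ℝ) : ∑ _m : F, D = (p:ℝ) * D := by
  rw [Finset.sum_const, card_univ, ZMod.card, nsmul_eq_mul]

lemma Hone (b : F) (C D : ℝ) : ∑ m : F, (if m = b then C else D) = C + ((p:ℝ)-1)*D := by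
  rw [Hpick b (fun _ => D) C, Hconst]; ring

lemma Htwo (a b : F) (hab : a ≠ b) (C D : ℝ) :
    ∑ m : F, (if m = a then 0 else if m = b then C else D) = C + ((p:ℝ)-2)*D := by
  rw [Hsub, Hone, if_neg hab]
  ring

lemma Hthree (a b c : F) (hab : a ≠ b) (hac : a ≠ c) (hbc : b ≠ c) (C₁ C₂ D : ℝ) :
    ∑ m : F, (if m = a then 0 else if m = b then C₁ else if m = c then C₂ else D)
      = C₁ + C₂ + ((p:ℝ)-3)*D := by
  rw [Hsub, Hpick b (fun m => if m = c then C₂ else D) C₁, Hone]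
  simp only [if_neg hbc, if_neg hab, if_neg hac]
  ring

lemma w3_eq (x u y v : F) (hu : u ≠ 0) (hv : v ≠ 0) :
    w 3 x u y v =
      if y = x - (u*v)⁻¹ then 2*(p:ℝ)-3
      else if y = x then (p:ℝ)-2 else (p:ℝ)-3 := by
  have huv : u*v ≠ 0 := mul_ne_zero hu hv
  set z₀ : F := x - (u*v)⁻¹ with hz₀
  have hz₀x : z₀ ≠ x := by
    rw [hz₀]
    intro h
    exact inv_ne_zero huv (sub_eq_self.1 h)
  have step1 : w 3 x u y v = ∑ z : F, w 2 z ((u*(z-x))⁻¹) y v := by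
    have h := w_comp 1 2 x u y v
    norm_num at h
    rw [h]
    refine Finset.sum_congr rfl fun z _ => ?_
    rw [Finset.sum_congr rfl (g := fun m => if m = (u*(z-x))⁻¹ then w 2 z m y v else 0)
      (fun m _ => by
        show w 1 x u z m * w 2 z m y v =
          if m = (u * (z - x))⁻¹ then w 2 z m y v else 0
        rw [w1_eq]
        by_cases h : m = (u*(z-x))⁻¹
        · rw [if_pos h, if_pos (by rw [h, inv_inv]), one_mul]
        · rw [if_neg h, if_neg (fun hc => h (by rw [← inv_inv m, ← hc])), zero_mul])]
    rw [Finset.sum_ite_eq' Finset.univ _ (fun m => w 2 z m y v)]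
    simp only [mem_univ, if_true]
  rw [step1]
  have pw : ∀ z : F, w 2 z ((u*(z-x))⁻¹) y v =
      if z = x then 0 else if z = z₀ then (if y = z then (p-1:ℝ) else 0)
      else (if y = z then 0 else 1) := by
    intro z
    by_cases hzx : z = x
    · subst hzx
      rw [if_pos rfl]
      simp only [sub_self, mul_zero, inv_zero]
      exact w2_u_zero _ _ _ hv
    · rw [if_neg hzx]
      have hm' : (u*(z-x))⁻¹ ≠ 0 := inv_ne_zero (mul_ne_zero hu (sub_ne_zero.2 hzx))
      rw [w2_eq _ _ _ _ hm' hv]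
      have hcond : ((u*(z-x))⁻¹ + v = 0) = (z = z₀) := by
        rw [eq_iff_iff, add_eq_zero_iff_eq_neg, inv_eq_iff_eq_inv]
        constructor
        · intro h
          have h3 : u * (z - x) * (-v) = 1 := (mul_eq_one_iff_eq_inv₀ (neg_ne_zero.2 hv)).2 h
          have h2 : (x - z) * (u*v) = 1 := by linear_combination h3
          have h4 := (mul_eq_one_iff_eq_inv₀ huv).1 h2
          rw [hz₀]
          linear_combination -h4
        · intro h
          rw [h, hz₀, inv_neg]
          have : x - (u*v)⁻¹ - x = -(u*v)⁻¹ := by ring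
          rw [this, mul_inv, mul_neg, mul_inv_cancel_left₀ hu]
      simp only [hcond]
  rw [Finset.sum_congr rfl fun z _ => pw z]
  by_cases hyz₀ : y = z₀
  · rw [if_pos hyz₀]
    rw [Finset.sum_congr rfl (g := fun z => if z = x then 0 else if z = z₀ then (p:ℝ)-1 else 1)
      (fun z _ => by
        by_cases h1 : z = x
        · simp [h1]
        · rw [if_neg h1, if_neg h1]
          by_cases h2 : z = z₀
          · rw [if_pos h2, if_pos h2, if_pos (hyz₀.trans h2.symm)]
          · rw [if_neg h2, if_neg h2, if_neg (fun hc : y = z => h2 (hc.symm.trans hyz₀))])]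
    rw [Htwo x z₀ (fun h => hz₀x h.symm) ((p:ℝ)-1) 1]
    ring
  · rw [if_neg hyz₀]
    by_cases hyx : y = x
    · rw [if_pos hyx]
      rw [Finset.sum_congr rfl (g := fun z => if z = x then 0 else if z = z₀ then (0:ℝ) else 1)
        (fun z _ => by
          by_cases h1 : z = x
          · simp [h1]
          · rw [if_neg h1, if_neg h1]
            by_cases h2 : z = z₀
            · rw [if_pos h2, if_pos h2, if_neg (fun hc : y = z => h1 (hc.symm.trans hyx))]
            · rw [if_neg h2, if_neg h2, if_neg (fun hc : y = z => h1 (hc.symm.trans hyx))])]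
      rw [Htwo x z₀ (fun h => hz₀x h.symm) (0:ℝ) 1]
      ring
    · rw [if_neg hyx]
      rw [Finset.sum_congr rfl
        (g := fun z => if z = x then 0 else if z = z₀ then (0:ℝ) else if z = y then 0 else 1)
        (fun z _ => by
          by_cases h1 : z = x
          · simp [h1]
          · rw [if_neg h1, if_neg h1]
            by_cases h2 : z = z₀
            · rw [if_pos h2, if_pos h2, if_neg (fun hc : y = z => hyz₀ (hc.trans h2))]
            · rw [if_neg h2, if_neg h2]
              by_cases h3 : z = y
              · rw [if_pos h3, if_pos h3.symm]
              · rw [if_neg h3, if_neg (fun hc : y = z => h3 hc.symm)])]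
      rw [Hthree x z₀ y (fun h => hz₀x h.symm) (fun h => hyx h.symm)
        (fun h => hyz₀ h.symm) (0:ℝ) 0 1]
      ring

lemma w4_eq (x u y v : F) (hu : u ≠ 0) (hv : v ≠ 0) :
    w 4 x u y v =
      if u = v then (if y = x then ((p:ℝ)-1)*(2*(p:ℝ)-3) else ((p:ℝ)-2)^2)
      else (if y = x then ((p:ℝ)-3)*((p:ℝ)-1)
            else 2*((p:ℝ)-1) + ((p:ℝ)-3)*((p:ℝ)-2)) := by
  have h := w_comp 2 2 x u y v
  norm_num at h
  rw [h, Finset.sum_comm]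
  have inner : ∀ m : F, ∑ z : F, w 2 x u z m * w 2 z m y v =
      (if m = 0 then 0 else
        if m = -u then
          ((p:ℝ)-1) * (if m = -v then (if y = x then (p:ℝ)-1 else 0)
                       else (if y = x then 0 else 1))
        else if m = -v then ((p:ℝ)-1) * (if y = x then 0 else 1)
        else (if y = x then (p:ℝ)-1 else (p:ℝ)-2)) := by
    intro m
    by_cases hm0 : m = 0
    · rw [if_pos hm0, hm0]
      apply Finset.sum_eq_zero
      intro z _
      rw [w2_u_zero z y v hv, mul_zero]
    · rw [if_neg hm0]
      have c1 : (u + m = 0) = (m = -u) :=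
        propext ⟨fun h => by linear_combination h, fun h => by rw [h]; ring⟩
      have c2 : (m + v = 0) = (m = -v) :=
        propext ⟨fun h => by linear_combination h, fun h => by rw [h]; ring⟩
      by_cases hmu : m = -u
      · rw [if_pos hmu]
        rw [Finset.sum_congr rfl (g := fun z =>
            if z = x then ((p:ℝ)-1) * w 2 z m y v else 0)
          (fun z _ => by
            rw [w2_eq x u z m hu hm0]
            simp only [c1]
            rw [if_pos hmu]
            by_cases hz : z = x
            · rw [if_pos hz, if_pos hz]
            · rw [if_neg hz, if_neg hz, zero_mul])]
        rw [Finset.sum_ite_eq' Finset.univ x (fun z => ((p:ℝ)-1) * w 2 z m y v)]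
        simp only [mem_univ, if_true]
        rw [w2_eq x m y v (by rw [hmu]; exact neg_ne_zero.2 hu) hv]
        simp only [c2]
      · rw [if_neg hmu]
        by_cases hmv : m = -v
        · rw [if_pos hmv]
          rw [Finset.sum_congr rfl (g := fun z =>
              if z = y then (if z = x then (0:ℝ) else 1) * ((p:ℝ)-1) else 0)
            (fun z _ => by
              rw [w2_eq x u z m hu hm0, w2_eq z m y v (by rw [hmv]; exact neg_ne_zero.2 hv) hv]
              simp only [c1, c2]
              rw [if_neg hmu, if_pos hmv]
              by_cases hz : z = y
              · rw [if_pos hz, if_pos hz.symm]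
              · rw [if_neg hz, if_neg (fun hc : y = z => hz hc.symm), mul_zero])]
          rw [Finset.sum_ite_eq' Finset.univ y (fun z => (if z = x then (0:ℝ) else 1) * ((p:ℝ)-1))]
          simp only [mem_univ, if_true]
          rw [mul_comm]
        · rw [if_neg hmv]
          rw [Finset.sum_congr rfl (g := fun z =>
              if z = x then 0 else (if z = y then (0:ℝ) else 1))
            (fun z _ => by
              rw [w2_eq x u z m hu hm0, w2_eq z m y v hm0 hv]
              simp only [c1, c2]
              rw [if_neg hmu, if_neg hmv]
              by_cases hz : z = x
              · rw [if_pos hz, if_pos hz, zero_mul]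
              · rw [if_neg hz, if_neg hz, one_mul]
                by_cases hzy : z = y
                · rw [if_pos hzy, if_pos hzy.symm]
                · rw [if_neg hzy, if_neg (fun hc : y = z => hzy hc.symm)])]
          by_cases hyx : y = x
          · rw [Finset.sum_congr rfl (g := fun z => if z = x then (0:ℝ) else 1)
              (fun z _ => by
                by_cases hz : z = x
                · rw [if_pos hz, if_pos hz]
                · rw [if_neg hz, if_neg hz, if_neg (fun hc : z = y => hz (hc.trans hyx))])]
            rw [Hone x 0 1, if_pos hyx]
            ring
          · rw [Htwo x y (fun hc => hyx hc.symm) (0:ℝ) 1, if_neg hyx]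
            ring
  rw [Finset.sum_congr rfl fun m _ => inner m]
  by_cases huv : u = v
  · rw [if_pos huv]
    rw [Finset.sum_congr rfl (g := fun m => if m = 0 then 0 else
        if m = -u then ((p:ℝ)-1) * (if y = x then (p:ℝ)-1 else 0)
        else (if y = x then (p:ℝ)-1 else (p:ℝ)-2))
      (fun m _ => by
        by_cases hm0 : m = 0
        · rw [if_pos hm0, if_pos hm0]
        · rw [if_neg hm0, if_neg hm0]
          by_cases hmu : m = -u
          · rw [if_pos hmu, if_pos hmu, if_pos (by rw [hmu, huv])]
          · rw [if_neg hmu, if_neg hmu, if_neg (fun hc : m = -v => hmu (by rw [hc, huv]))])]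
    rw [Htwo 0 (-u) (fun hc => hu (neg_eq_zero.1 hc.symm)) _ _]
    split_ifs with hyx <;> ring
  · rw [if_neg huv]
    rw [Finset.sum_congr rfl (g := fun m => if m = 0 then 0 else
        if m = -u then ((p:ℝ)-1) * (if y = x then 0 else 1)
        else if m = -v then ((p:ℝ)-1) * (if y = x then 0 else 1)
        else (if y = x then (p:ℝ)-1 else (p:ℝ)-2))
      (fun m _ => by
        by_cases hm0 : m = 0
        · rw [if_pos hm0, if_pos hm0]
        · rw [if_neg hm0, if_neg hm0]
          by_cases hmu : m = -u
          · rw [if_pos hmu, if_pos hmu,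
              if_neg (fun hc : m = -v => huv (neg_inj.1 ((hmu.symm.trans hc) ▸ rfl)))]
          · rw [if_neg hmu, if_neg hmu])]
    rw [Hthree 0 (-u) (-v) (fun hc => hu (neg_eq_zero.1 hc.symm))
      (fun hc => hv (neg_eq_zero.1 hc.symm)) (fun hc => huv (neg_inj.1 hc)) _ _ _]
    split_ifs with hyx <;> ring

lemma key_identity (hp2 : (2:F) ≠ 0) (x u y v : F) (hu : u ≠ 0) (hv : v ≠ 0) :
    (w 4 x u y v + w 4 x u y (-v)) + (w 3 x u y v + w 3 x u y (-v))
      = (p:ℝ) * (w 2 x u y v + w 2 x u y (-v))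
        + (p:ℝ) * (w 1 x u y v + w 1 x u y (-v))
        + 2*((p:ℝ)^2 - 3*(p:ℝ) + 1) := by
  have hv' : (-v : F) ≠ 0 := neg_ne_zero.2 hv
  have huv : u * v ≠ 0 := mul_ne_zero hu hv
  have hi : (u*v)⁻¹ ≠ 0 := inv_ne_zero huv
  rw [w1_eq, w1_eq, w2_eq x u y v hu hv, w2_eq x u y (-v) hu hv',
    w3_eq x u y v hu hv, w3_eq x u y (-v) hu hv',
    w4_eq x u y v hu hv, w4_eq x u y (-v) hu hv']
  have e1 : (u*(y-x) = v⁻¹) = (y = x + (u*v)⁻¹) := by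
    rw [eq_iff_iff, ← mul_eq_one_iff_eq_inv₀ hv]
    constructor
    · intro h
      have h2 : (y - x) * (u*v) = 1 := by linear_combination h
      have h3 := (mul_eq_one_iff_eq_inv₀ huv).1 h2
      linear_combination h3
    · intro h
      have h2 : y - x = (u*v)⁻¹ := by rw [h]; ring
      have h3 := (mul_eq_one_iff_eq_inv₀ huv).2 h2
      linear_combination h3
  have e2 : (u*(y-x) = (-v)⁻¹) = (y = x - (u*v)⁻¹) := by
    rw [eq_iff_iff, ← mul_eq_one_iff_eq_inv₀ (neg_ne_zero.2 hv)]
    constructor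
    · intro h
      have h2 : (x - y) * (u*v) = 1 := by linear_combination h
      have h3 := (mul_eq_one_iff_eq_inv₀ huv).1 h2
      linear_combination -h3
    · intro h
      have h2 : x - y = (u*v)⁻¹ := by rw [h]; ring
      have h3 := (mul_eq_one_iff_eq_inv₀ huv).2 h2
      linear_combination h3
  have e3 : x - (u*(-v))⁻¹ = x + (u*v)⁻¹ := by
    rw [mul_neg, inv_neg, sub_neg_eq_add]
  have c4 : (u + -v = 0) = (u = v) :=
    propext ⟨fun h => by linear_combination h, fun h => by rw [h]; ring⟩
  have c5 : (u + v = 0) = (u = -v) :=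
    propext ⟨fun h => by linear_combination h, fun h => by rw [h]; ring⟩
  simp only [e1, e2, e3, c4, c5]
  have hvv : ¬ (v = -v) := fun h => by
    have h2 : (2:F)*v = 0 := by linear_combination h
    rcases mul_eq_zero.1 h2 with h3 | h3
    · exact hp2 h3
    · exact hv h3
  have hMP : ¬ (x - (u*v)⁻¹ = x + (u*v)⁻¹) := fun h => by
    have h2 : (2:F)*(u*v)⁻¹ = 0 := by linear_combination -h
    rcases mul_eq_zero.1 h2 with h3 | h3
    · exact hp2 h3
    · exact hi h3
  have hMC : ¬ (x - (u*v)⁻¹ = x) := fun h => hi (sub_eq_self.1 h)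
  have hPC : ¬ (x + (u*v)⁻¹ = x) := fun h => hi (by linear_combination h)
  split_ifs <;>
    first
      | ring1
      | exact absurd (‹u = v›.symm.trans ‹u = -v›) hvv
      | exact absurd (‹y = x - (u*v)⁻¹›.symm.trans ‹y = x + (u*v)⁻¹›) hMP
      | exact absurd (‹y = x - (u*v)⁻¹›.symm.trans ‹y = x›) hMC
      | exact absurd (‹y = x + (u*v)⁻¹›.symm.trans ‹y = x›) hPC

section Plumbing

variable [NeZero p]

lemma gcd_lemma (a u : F) (hu : u ≠ 0) : Nat.gcd (Nat.gcd a.val u.val) p = 1 := by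
  have hp : p.Prime := Fact.out
  rcases (Nat.coprime_or_dvd_of_prime hp (Nat.gcd a.val u.val)) with h | h
  · exact Nat.coprime_comm.mp h
  · exfalso
    have h2 : p ∣ u.val := h.trans (Nat.gcd_dvd_right _ _)
    have h3 : u.val < p := ZMod.val_lt u
    have h4 : u.val ≠ 0 := fun h0 => hu ((ZMod.val_eq_zero u).1 h0)
    have := Nat.le_of_dvd (Nat.pos_of_ne_zero h4) h2
    omega

def pairOf (x u : F) : PlatonicPair p :=
  if hu : u = 0 then ⟨((0:F), (1:F)), gcd_lemma 0 1 one_ne_zero⟩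
  else ⟨(x*u, u), gcd_lemma (x*u) u hu⟩

lemma pairOf_val (x u : F) (hu : u ≠ 0) : (pairOf x u).val = (x*u, u) := by
  rw [pairOf, dif_neg hu]

lemma pairOf_snd_ne (x u : F) : (pairOf x u).val.2 ≠ 0 := by
  rw [pairOf]
  split_ifs with h
  · exact one_ne_zero
  · exact h

def vert (x u : F) : {v : PlatonicVertex p | secondNZ p v} :=
  ⟨⟦pairOf x u⟧, by
    intro x' hx'
    rcases Quotient.exact hx' with h | h
    · intro h0
      exact pairOf_snd_ne x u (((congrArg Prod.snd h).trans h0))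
    · intro h0
      apply pairOf_snd_ne x u
      have h2 := (congrArg Prod.snd h)
      rw [Prod.snd_neg, h0, neg_zero] at h2
      exact h2⟩

lemma vert_val (x u : F) : (vert x u : {v : PlatonicVertex p | secondNZ p v}).val = ⟦pairOf x u⟧ := rfl

lemma vert_neg (x u : F) (hu : u ≠ 0) : vert x (-u) = vert x u := by
  apply Subtype.ext
  rw [vert_val, vert_val]
  apply Quotient.sound
  right
  rw [pairOf_val x u hu, pairOf_val x (-u) (neg_ne_zero.2 hu)]
  rw [Prod.ext_iff]
  constructor
  · simp [mul_neg]
  · simp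

lemma vert_inj {x x' u u' : F} (hu : u ≠ 0) (hu' : u' ≠ 0)
    (h : vert x u = vert x' u') : x = x' := by
  have h2 := Quotient.exact (congrArg Subtype.val h)
  rcases h2 with h3 | h3 <;> rw [pairOf_val x u hu, pairOf_val x' u' hu'] at h3
  · have ha := congrArg Prod.fst h3
    have hb := congrArg Prod.snd h3
    simp only at ha hb
    subst hb
    exact (mul_right_cancel₀ hu ha).symm
  · have ha := congrArg Prod.fst h3
    have hb := congrArg Prod.snd h3
    simp only [Prod.fst_neg, Prod.snd_neg] at ha hb
    rw [hb] at ha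
    have hc : x' * u = x * u := by linear_combination -ha
    exact (mul_right_cancel₀ hu hc).symm

lemma vert_surj (wv : {v : PlatonicVertex p | secondNZ p v}) :
    ∃ x u, u ≠ 0 ∧ wv = vert x u := by
  obtain ⟨q, hq⟩ := Quotient.exists_rep wv.val
  have hu : q.val.2 ≠ 0 := wv.property q hq
  refine ⟨q.val.1 * (q.val.2)⁻¹, q.val.2, hu, ?_⟩
  apply Subtype.ext
  rw [vert_val, ← hq]
  have hpq : pairOf (q.val.1 * (q.val.2)⁻¹) q.val.2 = q := by
    apply Subtype.ext
    rw [pairOf_val _ _ hu]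
    rw [Prod.ext_iff]
    exact ⟨inv_mul_cancel_right₀ hu _, rfl⟩
  rw [hpq]

lemma adj_iff (x u : F) (hu : u ≠ 0) (wv : {v : PlatonicVertex p | secondNZ p v}) :
    (ModPlatonic p).Adj (vert x u) wv ↔ ∃ t, t ≠ 0 ∧ wv = vert (x+t) ((u*t)⁻¹) := by
  constructor
  · rintro ⟨hne, x', y', hx', hy', hdet⟩
    simp only [Function.Embedding.coe_subtype] at hx' hy'
    have hx2 := Quotient.exact hx'
    have hω : y'.val.2 ≠ 0 := wv.property y' hy'
    set ν := y'.val.1 with hν0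
    set ω := y'.val.2 with hω0
    obtain ⟨δ, hδδ, hdet'⟩ : ∃ δ : F, (δ = 1 ∨ δ = -1) ∧ x*u*ω - u*ν = δ := by
      rcases hx2 with h | h <;> rw [pairOf_val x u hu] at h
      · have h1 := congrArg Prod.fst h
        have h2 := congrArg Prod.snd h
        simp only at h1 h2
        rcases hdet with hd | hd
        · exact ⟨1, Or.inl rfl, by linear_combination hd + ω * h1 - ν * h2⟩
        · exact ⟨-1, Or.inr rfl, by linear_combination hd + ω * h1 - ν * h2⟩
      · have h1 := congrArg Prod.fst h
        have h2 := congrArg Prod.snd h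
        simp only [Prod.fst_neg, Prod.snd_neg] at h1 h2
        rcases hdet with hd | hd
        · exact ⟨-1, Or.inr rfl, by linear_combination -hd + ω * h1 - ν * h2⟩
        · exact ⟨1, Or.inl rfl, by linear_combination -hd + ω * h1 - ν * h2⟩
    have hδ0 : δ ≠ 0 := by
      rcases hδδ with rfl | rfl
      · exact one_ne_zero
      · exact neg_ne_zero.2 one_ne_zero
    have h5 : u * u⁻¹ = 1 := mul_inv_cancel₀ hu
    have h6 : ω * ω⁻¹ = 1 := mul_inv_cancel₀ hω
    have hνval : ν = x*ω - δ*u⁻¹ := by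
      linear_combination (-(u:F)⁻¹) * hdet' + (x*ω - ν) * h5
    refine ⟨-δ * (u*ω)⁻¹, mul_ne_zero (neg_ne_zero.2 hδ0) (inv_ne_zero (mul_ne_zero hu hω)), ?_⟩
    have ht1 : u * (-δ * (u*ω)⁻¹) = -δ * ω⁻¹ := by
      rw [mul_inv]
      linear_combination (-δ*ω⁻¹) * h5
    have hti : (u * (-δ * (u*ω)⁻¹))⁻¹ = -δ * ω := by
      rw [ht1]
      rcases hδδ with rfl | rfl
      · simp [inv_neg]
      · simp
    apply Subtype.ext
    rw [vert_val, ← hy']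
    symm
    apply Quotient.sound
    show y'.val = (pairOf (x + -δ * (u*ω)⁻¹) ((u * (-δ * (u*ω)⁻¹))⁻¹)).val ∨
      y'.val = -(pairOf (x + -δ * (u*ω)⁻¹) ((u * (-δ * (u*ω)⁻¹))⁻¹)).val
    rw [pairOf_val _ _ (by rw [hti]; exact mul_ne_zero (neg_ne_zero.2 hδ0) hω), hti]
    rcases hδδ with rfl | rfl
    · right
      rw [Prod.ext_iff]
      simp only [Prod.fst_neg, Prod.snd_neg]
      constructor
      · rw [← hν0, hνval, mul_inv]
        linear_combination (u:F)⁻¹ * h6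
      · show (y'.val).2 = -(-1*ω)
        rw [← hω0]
        ring
    · left
      rw [Prod.ext_iff]
      constructor
      · rw [← hν0, hνval, mul_inv]
        linear_combination (-(u:F)⁻¹) * h6
      · show (y'.val).2 = -(-1)*ω
        rw [← hω0]
        ring
  · rintro ⟨t, ht, rfl⟩
    have hut0 : u * t ≠ 0 := mul_ne_zero hu ht
    have hut : (u*t)⁻¹ ≠ 0 := inv_ne_zero hut0
    refine ⟨?_, pairOf x u, pairOf (x+t) ((u*t)⁻¹), rfl, rfl, ?_⟩
    · intro heq
      have heq' : (vert x u : {v : PlatonicVertex p | secondNZ p v}).val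
          = (vert (x+t) ((u*t)⁻¹) : {v : PlatonicVertex p | secondNZ p v}).val := heq
      have h2 := Quotient.exact heq'
      rcases h2 with h3 | h3 <;> rw [pairOf_val x u hu, pairOf_val _ _ hut] at h3
      · have h1 := congrArg Prod.fst h3
        have hb := congrArg Prod.snd h3
        simp only at h1 hb
        have : t * u = 0 := by linear_combination h1 - (x+t) * hb
        rcases mul_eq_zero.1 this with h' | h'
        · exact ht h'
        · exact hu h'
      · have h1 := congrArg Prod.fst h3
        have hb := congrArg Prod.snd h3
        simp only [Prod.fst_neg, Prod.snd_neg] at h1 hb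
        have : t * u = 0 := by linear_combination (x+t) * hb - h1
        rcases mul_eq_zero.1 this with h' | h'
        · exact ht h'
        · exact hu h'
    · right
      rw [pairOf_val x u hu, pairOf_val _ _ hut]
      have h5 : (u*t) * (u*t)⁻¹ = 1 := mul_inv_cancel₀ hut0
      show x*u * (u*t)⁻¹ - u * ((x+t) * (u*t)⁻¹) = -1
      linear_combination -h5

lemma wk_apply (g : F → F → ℝ) (μ : ℝ)
    (heig : ∀ x u, ∑ t : F, g (x+t) ((u*t)⁻¹) = μ * g x u) :
    ∀ (k : ℕ) (x u : F), ∑ y : F, ∑ v : F, w k x u y v * g y v = μ^k * g x u := by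
  intro k
  induction k with
  | zero =>
    intro x u
    simp only [w, pow_zero, one_mul]
    rw [Finset.sum_eq_single x]
    · rw [Finset.sum_eq_single u]
      · simp
      · intro v _ hv; simp [hv]
      · simp
    · intro y _ hy
      apply Finset.sum_eq_zero
      intro v _
      simp [hy]
    · simp
  | succ k ih =>
    intro x u
    show ∑ y : F, ∑ v : F, (∑ t : F, w k (x+t) ((u*t)⁻¹) y v) * g y v = _
    calc ∑ y : F, ∑ v : F, (∑ t : F, w k (x+t) ((u*t)⁻¹) y v) * g y v
        = ∑ y : F, ∑ v : F, ∑ t : F, w k (x+t) ((u*t)⁻¹) y v * g y v := by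
          refine Finset.sum_congr rfl fun y _ => Finset.sum_congr rfl fun v _ => ?_
          rw [Finset.sum_mul]
      _ = ∑ t : F, ∑ y : F, ∑ v : F, w k (x+t) ((u*t)⁻¹) y v * g y v := by
          rw [Finset.sum_congr rfl fun y (_ : y ∈ Finset.univ) => Finset.sum_comm]
          exact Finset.sum_comm
      _ = ∑ t : F, μ^k * g (x+t) ((u*t)⁻¹) :=
          Finset.sum_congr rfl fun t _ => ih (x+t) ((u*t)⁻¹)
      _ = μ^k * ∑ t : F, g (x+t) ((u*t)⁻¹) := by rw [Finset.mul_sum]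
      _ = μ^k * (μ * g x u) := by rw [heig]
      _ = μ^(k+1) * g x u := by ring

lemma main_pointwise (hp2 : (2:F) ≠ 0) (g : F → F → ℝ) (μ : ℝ)
    (heig : ∀ x u, ∑ t : F, g (x+t) ((u*t)⁻¹) = μ * g x u)
    (heven : ∀ x v, g x (-v) = g x v) (hzero : ∀ x, g x 0 = 0)
    (x u : F) (hu : u ≠ 0) :
    (μ^4 + μ^3 - (p:ℝ)*μ^2 - (p:ℝ)*μ) * g x u
      = ((p:ℝ)^2 - 3*(p:ℝ) + 1) * ∑ y : F, ∑ v : F, g y v := by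
  have h4 := wk_apply g μ heig 4 x u
  have h3 := wk_apply g μ heig 3 x u
  have h2 := wk_apply g μ heig 2 x u
  have h1 := wk_apply g μ heig 1 x u
  set W : F → F → ℝ := fun y v =>
    w 4 x u y v + w 3 x u y v - (p:ℝ)*w 2 x u y v - (p:ℝ)*w 1 x u y v with hW
  have hLHS : (μ^4 + μ^3 - (p:ℝ)*μ^2 - (p:ℝ)*μ) * g x u
      = ∑ y : F, ∑ v : F, W y v * g y v := by
    have hpt : ∀ y v : F, W y v * g y v
        = w 4 x u y v * g y v + w 3 x u y v * g y v
          - (p:ℝ)*(w 2 x u y v * g y v) - (p:ℝ)*(w 1 x u y v * g y v) := by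
      intro y v
      rw [hW]
      ring
    rw [Finset.sum_congr rfl fun y _ => Finset.sum_congr rfl fun v _ => hpt y v]
    simp only [Finset.sum_add_distrib, Finset.sum_sub_distrib, ← Finset.mul_sum]
    rw [h4, h3, h2, h1]
    ring
  have hflip : ∑ y : F, ∑ v : F, W y v * g y v = ∑ y : F, ∑ v : F, W y (-v) * g y v := by
    refine Finset.sum_congr rfl fun y _ => ?_
    refine Fintype.sum_equiv (Equiv.neg F) _ _ (fun v => ?_)
    rw [Equiv.neg_apply, heven, neg_neg]
  have hKey : ∑ y : F, ∑ v : F, (W y v + W y (-v)) * g y v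
      = ∑ y : F, ∑ v : F, 2*((p:ℝ)^2 - 3*(p:ℝ) + 1) * g y v := by
    refine Finset.sum_congr rfl fun y _ => Finset.sum_congr rfl fun v _ => ?_
    by_cases hv : v = 0
    · rw [hv, hzero, mul_zero, mul_zero]
    · have hk := key_identity hp2 x u y v hu hv
      have hWW : W y v + W y (-v) = 2*((p:ℝ)^2 - 3*(p:ℝ) + 1) := by
        rw [hW]
        dsimp only
        linear_combination hk
      rw [hWW]
  have hcomb : ∑ y : F, ∑ v : F, (W y v + W y (-v)) * g y v
      = (∑ y : F, ∑ v : F, W y v * g y v) + (∑ y : F, ∑ v : F, W y (-v) * g y v) := by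
    simp only [add_mul, Finset.sum_add_distrib]
  have h2K : ∑ y : F, ∑ v : F, 2*((p:ℝ)^2 - 3*(p:ℝ) + 1) * g y v
      = 2*((p:ℝ)^2 - 3*(p:ℝ) + 1) * ∑ y : F, ∑ v : F, g y v := by
    simp only [← Finset.mul_sum]
  rw [hLHS]
  linarith [hKey, hcomb, h2K, hflip]

end Plumbing

end RamAux

/-- The `(p-1)`-regular graph `Π_p'` is Ramanujan for every odd prime `p`: any real
eigenvalue `μ` of its adjacency matrix with `|μ| ≠ p - 1` satisfies `|μ| ≤ 2√(p-2)`. -/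
theorem modPlatonic_ramanujan (p : ℕ) (hp : p.Prime) (hodd : Odd p) [NeZero p]
    (μ : ℝ)
    (hev : ∃ f : {v : PlatonicVertex p | secondNZ p v} → ℝ, f ≠ 0 ∧
      ((ModPlatonic p).adjMatrix ℝ).mulVec f = μ • f)
    (hne : |μ| ≠ (p : ℝ) - 1) :
    |μ| ≤ 2 * Real.sqrt ((p : ℝ) - 2) := by
  haveI : Fact p.Prime := ⟨hp⟩
  obtain ⟨f, hf, hmul⟩ := hev
  have hp3 : 3 ≤ p := by
    have h2 := hp.two_le
    have := Nat.odd_iff.1 hodd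
    omega
  have hp3R : (3:ℝ) ≤ (p:ℝ) := by exact_mod_cast hp3
  have hp2 : (2 : ZMod p) ≠ 0 := by
    intro h
    have h' : ((2:ℕ) : ZMod p) = 0 := by exact_mod_cast h
    have hd := (ZMod.natCast_eq_zero_iff 2 p).1 h'
    have := (Nat.prime_dvd_prime_iff_eq hp Nat.prime_two).1 hd
    omega
  set g : ZMod p → ZMod p → ℝ :=
    fun x u => if u = 0 then 0 else f (RamAux.vert x u) with hg
  have hzero : ∀ x, g x 0 = 0 := fun x => by rw [hg]; simp
  have hgval : ∀ x u, u ≠ 0 → g x u = f (RamAux.vert x u) := fun x u hu => by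
    rw [hg]
    simp [hu]
  have heven : ∀ x v, g x (-v) = g x v := by
    intro x v
    by_cases hv : v = 0
    · rw [hv, neg_zero]
    · rw [hgval x (-v) (neg_ne_zero.2 hv), hgval x v hv, RamAux.vert_neg x v hv]
  have hA : ∀ wv, ∑ w' ∈ (ModPlatonic p).neighborFinset wv, f w' = μ * f wv := by
    intro wv
    have h := congrFun hmul wv
    rw [SimpleGraph.adjMatrix_mulVec_apply] at h
    rw [h]
    simp
  have heig : ∀ x u, ∑ t : ZMod p, g (x+t) ((u*t)⁻¹) = μ * g x u := by
    intro x u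
    by_cases hu : u = 0
    · rw [hu, hzero, mul_zero]
      apply Finset.sum_eq_zero
      intro t _
      rw [zero_mul, inv_zero, hzero]
    · rw [hgval x u hu, ← hA (RamAux.vert x u)]
      rw [← Finset.add_sum_erase _ _ (Finset.mem_univ (0 : ZMod p))]
      have hterm : g (x+0) ((u*0)⁻¹) = 0 := by rw [mul_zero, inv_zero, hzero]
      rw [hterm, zero_add]
      apply Finset.sum_bij (fun t _ => RamAux.vert (x+t) ((u*t)⁻¹))
      · intro t ht
        rw [SimpleGraph.mem_neighborFinset]
        exact (RamAux.adj_iff x u hu _).2 ⟨t, (Finset.mem_erase.1 ht).1, rfl⟩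
      · intro t1 h1 t2 h2 heq
        have := RamAux.vert_inj (inv_ne_zero (mul_ne_zero hu (Finset.mem_erase.1 h1).1))
          (inv_ne_zero (mul_ne_zero hu (Finset.mem_erase.1 h2).1)) heq
        exact add_left_cancel this
      · intro w' hw'
        rw [SimpleGraph.mem_neighborFinset] at hw'
        obtain ⟨t, ht, hwt⟩ := (RamAux.adj_iff x u hu w').1 hw'
        exact ⟨t, Finset.mem_erase.2 ⟨ht, Finset.mem_univ t⟩, hwt.symm⟩
      · intro t ht
        rw [hgval _ _ (inv_ne_zero (mul_ne_zero hu (Finset.mem_erase.1 ht).1))]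
  have hgn : ∃ x u, u ≠ 0 ∧ g x u ≠ 0 := by
    have hex : ∃ wv, f wv ≠ 0 := by
      by_contra hc
      push_neg at hc
      exact hf (funext fun wv => hc wv)
    obtain ⟨wv, hwv⟩ := hex
    obtain ⟨x, u, hu, rfl⟩ := RamAux.vert_surj wv
    exact ⟨x, u, hu, by rw [hgval x u hu]; exact hwv⟩
  set S : ℝ := ∑ y : ZMod p, ∑ v : ZMod p, g y v with hS
  have hmain := fun (x u : ZMod p) (hu : u ≠ 0) =>
    RamAux.main_pointwise hp2 g μ heig heven hzero x u hu
  by_cases hS0 : S = 0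
  · obtain ⟨x, u, hu, hgx⟩ := hgn
    have h0 := hmain x u hu
    rw [← hS, hS0, mul_zero] at h0
    have hsc : μ^4 + μ^3 - (p:ℝ)*μ^2 - (p:ℝ)*μ = 0 := by
      rcases mul_eq_zero.1 h0 with h | h
      · exact h
      · exact absurd h hgx
    have hfact : μ * (μ+1) * (μ^2 - (p:ℝ)) = 0 := by linear_combination hsc
    have hsq : (1:ℝ) ≤ Real.sqrt ((p:ℝ)-2) := by
      rw [show (1:ℝ) = Real.sqrt 1 by rw [Real.sqrt_one]]
      exact Real.sqrt_le_sqrt (by linarith)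
    rcases mul_eq_zero.1 hfact with h | h
    · rcases mul_eq_zero.1 h with h' | h'
      · rw [h', abs_zero]
        positivity
      · have hm : μ = -1 := by linarith
        rw [hm, abs_neg, abs_one]
        linarith
    · have hμ2 : μ^2 = (p:ℝ) := by linarith
      have habs : |μ| = Real.sqrt (p:ℝ) := by rw [← Real.sqrt_sq_eq_abs, hμ2]
      rw [habs]
      have h24 : (2:ℝ) * Real.sqrt ((p:ℝ)-2) = Real.sqrt (4*((p:ℝ)-2)) := by
        rw [show (4:ℝ)*((p:ℝ)-2) = 2^2 * ((p:ℝ)-2) by ring,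
          Real.sqrt_mul (by positivity), Real.sqrt_sq (by norm_num)]
      rw [h24]
      exact Real.sqrt_le_sqrt (by linarith)
  · exfalso
    have hK : ((p:ℝ)^2 - 3*(p:ℝ) + 1) ≠ 0 := by nlinarith
    have hKS : ((p:ℝ)^2 - 3*(p:ℝ) + 1) * S ≠ 0 := mul_ne_zero hK hS0
    have hsc : μ^4 + μ^3 - (p:ℝ)*μ^2 - (p:ℝ)*μ ≠ 0 := by
      intro h
      have h0 := hmain 0 1 one_ne_zero
      rw [h, zero_mul, ← hS] at h0
      exact hKS h0.symm
    set C : ℝ := ((p:ℝ)^2 - 3*(p:ℝ) + 1) * S / (μ^4 + μ^3 - (p:ℝ)*μ^2 - (p:ℝ)*μ) with hC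
    have hCne : C ≠ 0 := div_ne_zero hKS hsc
    have hgC : ∀ x u : ZMod p, u ≠ 0 → g x u = C := by
      intro x u hu
      rw [hC, eq_div_iff hsc]
      have h0 := hmain x u hu
      rw [← hS] at h0
      linear_combination h0
    have h1 := heig 0 1
    rw [Finset.sum_congr rfl (g := fun t : ZMod p => if t = 0 then 0 else C) (fun t _ => by
      show g (0 + t) ((1 * t)⁻¹) = if t = 0 then 0 else C
      by_cases ht : t = 0
      · rw [if_pos ht, ht, mul_zero, inv_zero, hzero]
      · rw [if_neg ht]
        exact hgC _ _ (inv_ne_zero (by rw [one_mul]; exact ht)))] at h1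
    rw [RamAux.Hsub 0 (fun _ => C), RamAux.Hconst] at h1
    rw [hgC 0 1 one_ne_zero] at h1
    have hfac : ((p:ℝ) - 1 - μ) * C = 0 := by linear_combination h1
    have hμp : μ = (p:ℝ) - 1 := by
      rcases mul_eq_zero.1 hfac with h | h
      · linarith
      · exact absurd h hCne
    exact hne (by rw [hμp, abs_of_nonneg (by linarith)])
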